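/- arXiv:1511.04286 — 5 statements merged into one kernel-verified Lean document; each statement's English description precedes it below -/
import Mathlib

section
/- Let cl be a closure operation satisfying the functoriality axiom and the direct sum decomposition property. If N_i ⊆ M_i for i = 1, 2 are R-modules, then (N_1 ⊕ N_2)^cl_{M_1 ⊕ M_2} = (N_1)^cl_{M_1} ⊕ (N_2)^cl_{M_2}. -/
/-- for a closure operation satisfying axioms (1)-(5),
`(N₁ ⊕ N₂)^cl_{M₁ ⊕ M₂} = (N₁)^cl_{M₁} ⊕ (N₂)^cl_{M₂}`. -/
theorem stmt2 {R : Type} [CommRing R]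
    (cl : ∀ (M : Type) [AddCommGroup M] [Module R M], Submodule R M → Submodule R M)
    (ax1 : ∀ (M : Type) [AddCommGroup M] [Module R M] (N : Submodule R M), N ≤ cl M N)
    (ax2 : ∀ (M : Type) [AddCommGroup M] [Module R M] (N : Submodule R M),
      cl M (cl M N) = cl M N)
    (ax3 : ∀ (W : Type) [AddCommGroup W] [Module R W] (N M : Submodule R W),
      N ≤ M → cl W N ≤ cl W M)
    (ax4 : ∀ (M W : Type) [AddCommGroup M] [Module R M] [AddCommGroup W] [Module R W]
      (f : M →ₗ[R] W) (N : Submodule R M), (cl M N).map f ≤ cl W (N.map f))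
    (ax5 : ∀ (M : Type) [AddCommGroup M] [Module R M] (N : Submodule R M),
      cl M N = N → cl (M ⧸ N) (⊥ : Submodule R (M ⧸ N)) = ⊥)
    {M₁ M₂ : Type} [AddCommGroup M₁] [Module R M₁] [AddCommGroup M₂] [Module R M₂]
    (N₁ : Submodule R M₁) (N₂ : Submodule R M₂) :
    cl (M₁ × M₂) (N₁.prod N₂) = (cl M₁ N₁).prod (cl M₂ N₂) := by
  apply le_antisymm
  · intro x hx
    constructor
    · have h1 : x.1 ∈ (cl (M₁ × M₂) (N₁.prod N₂)).map (LinearMap.fst R M₁ M₂) :=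
        ⟨x, hx, rfl⟩
      have h2 := ax4 (M₁ × M₂) M₁ (LinearMap.fst R M₁ M₂) (N₁.prod N₂) h1
      refine ax3 M₁ _ N₁ ?_ h2
      rintro y ⟨⟨a, b⟩, ⟨ha, _⟩, rfl⟩
      exact ha
    · have h1 : x.2 ∈ (cl (M₁ × M₂) (N₁.prod N₂)).map (LinearMap.snd R M₁ M₂) :=
        ⟨x, hx, rfl⟩
      have h2 := ax4 (M₁ × M₂) M₂ (LinearMap.snd R M₁ M₂) (N₁.prod N₂) h1
      refine ax3 M₂ _ N₂ ?_ h2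
      rintro y ⟨⟨a, b⟩, ⟨_, hb⟩, rfl⟩
      exact hb
  · rintro ⟨a, b⟩ ⟨ha, hb⟩
    have h1 : (a, (0 : M₂)) ∈ cl (M₁ × M₂) (N₁.prod N₂) := by
      have : (a, (0 : M₂)) ∈ (cl M₁ N₁).map (LinearMap.inl R M₁ M₂) := ⟨a, ha, rfl⟩
      have h2 := ax4 M₁ (M₁ × M₂) (LinearMap.inl R M₁ M₂) N₁ this
      refine ax3 (M₁ × M₂) _ _ ?_ h2
      rintro y ⟨n, hn, rfl⟩
      exact ⟨hn, Submodule.zero_mem _⟩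
    have h2 : ((0 : M₁), b) ∈ cl (M₁ × M₂) (N₁.prod N₂) := by
      have : ((0 : M₁), b) ∈ (cl M₂ N₂).map (LinearMap.inr R M₁ M₂) := ⟨b, hb, rfl⟩
      have h2 := ax4 M₂ (M₁ × M₂) (LinearMap.inr R M₁ M₂) N₂ this
      refine ax3 (M₁ × M₂) _ _ ?_ h2
      rintro y ⟨n, hn, rfl⟩
      exact ⟨Submodule.zero_mem _, hn⟩
    have := Submodule.add_mem _ h1 h2
    simpa using this
end

section
/- With the setup of the exact sequence G →^{ν_1} F ⊕ R →^{μ_1} M → 0 built from an injection α: R → M (where ν_1(g) = (ν(g), ν̃(g)) and μ_1(f,r) = μ̃(f) - α(r)): if α(1) ∈ mM then ν̃: G → R is surjective; conversely, if ν̃ is surjective and Im ν ⊆ mF, then α(1) ∈ mM. -/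
/-- in the setup of the exact sequence `G → F ⊕ R → M → 0` built
from an injection `α : R → M`: if `α 1 ∈ mM` then `ν̃` is surjective;
conversely if `ν̃` is surjective and `Im ν ⊆ mF` then `α 1 ∈ mM`. -/
theorem stmt10 {R M : Type} [CommRing R] [IsDomain R] [IsLocalRing R]
    [AddCommGroup M] [Module R M]
    (α : R →ₗ[R] M) (hα : Function.Injective α)
    {G F : Type} [AddCommGroup G] [Module R G] [Module.Free R G]
    [AddCommGroup F] [Module R F] [Module.Free R F]
    (ν : G →ₗ[R] F) (μ : F →ₗ[R] (M ⧸ LinearMap.range α))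
    (hμsurj : Function.Surjective μ)
    (hexact : LinearMap.range ν = LinearMap.ker μ)
    (μt : F →ₗ[R] M) (hlift : (LinearMap.range α).mkQ.comp μt = μ)
    (νt : G →ₗ[R] R) (hνt : α.comp νt = μt.comp ν) :
    (α 1 ∈ (IsLocalRing.maximalIdeal R) • (⊤ : Submodule R M) →
      Function.Surjective νt) ∧
    (Function.Surjective νt →
      LinearMap.range ν ≤ (IsLocalRing.maximalIdeal R) • (⊤ : Submodule R F) →
      α 1 ∈ (IsLocalRing.maximalIdeal R) • (⊤ : Submodule R M)) := by
  have hliftfun : ∀ f : F, (LinearMap.range α).mkQ (μt f) = μ f := fun f =>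
    congrFun (congrArg DFunLike.coe hlift) f
  have hνtfun : ∀ g : G, α (νt g) = μt (ν g) := fun g =>
    congrFun (congrArg DFunLike.coe hνt) g
  constructor
  · intro hmem
    -- surjectivity of μ₁ : F ⊕ R → M
    have hsurj1 : ∀ x : M, ∃ f r, μt f - α r = x := by
      intro x
      obtain ⟨f, hf⟩ := hμsurj ((LinearMap.range α).mkQ x)
      have h0 : (LinearMap.range α).mkQ (μt f - x) = 0 := by
        rw [map_sub, hliftfun, hf, sub_self]
      rw [Submodule.mkQ_apply, Submodule.Quotient.mk_eq_zero] at h0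
      obtain ⟨r, hr⟩ := h0
      exact ⟨f, r, by rw [hr, sub_sub_cancel]⟩
    have hP : ∃ f r, r ∈ IsLocalRing.maximalIdeal R ∧ μt f - α r = α 1 := by
      refine Submodule.smul_induction_on hmem ?_ ?_
      · intro a ha x _
        obtain ⟨f, r, hfr⟩ := hsurj1 x
        refine ⟨a • f, a • r, Ideal.mul_mem_right r _ ha, ?_⟩
        rw [map_smul, map_smul, ← smul_sub, hfr]
      · rintro x y ⟨f, r, hr, hx⟩ ⟨f', r', hr', hy⟩
        refine ⟨f + f', r + r', add_mem hr hr', ?_⟩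
        rw [map_add, map_add, add_sub_add_comm, hx, hy]
    obtain ⟨f, r, hr, hfr⟩ := hP
    have hf : μt f = α (1 + r) := by
      rw [map_add]; rw [sub_eq_iff_eq_add] at hfr; rw [hfr]
    have hμf : f ∈ LinearMap.ker μ := by
      rw [LinearMap.mem_ker, ← hliftfun, hf, Submodule.mkQ_apply,
        Submodule.Quotient.mk_eq_zero]
      exact LinearMap.mem_range_self α _
    rw [← hexact] at hμf
    obtain ⟨g, hg⟩ := hμf
    have hνg : νt g = 1 + r := by
      apply hα
      rw [hνtfun, hg, hf]
    have hu : IsUnit (1 + r) := by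
      by_contra hnu
      have : (1 : R) + r ∈ IsLocalRing.maximalIdeal R := hnu
      have h1 : (1 : R) ∈ IsLocalRing.maximalIdeal R := by
        have := sub_mem this hr
        simpa using this
      exact (IsLocalRing.maximalIdeal.isMaximal R).ne_top
        ((Ideal.eq_top_iff_one _).mpr h1)
    obtain ⟨u, hu⟩ := hu
    intro c
    refine ⟨(c * ↑u⁻¹) • g, ?_⟩
    rw [map_smul, smul_eq_mul, hνg, ← hu, mul_assoc, Units.inv_mul, mul_one]
  · intro hsurj hrange
    obtain ⟨g, hg⟩ := hsurj 1
    have h1 : α 1 = μt (ν g) := by rw [← hg, hνtfun]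
    have hνgmem : ν g ∈ (IsLocalRing.maximalIdeal R) • (⊤ : Submodule R F) :=
      hrange (LinearMap.mem_range_self ν g)
    have : μt (ν g) ∈
        Submodule.map μt ((IsLocalRing.maximalIdeal R) • (⊤ : Submodule R F)) :=
      Submodule.mem_map_of_mem hνgmem
    rw [Submodule.map_smul''] at this
    rw [h1]
    exact (smul_mono_right (IsLocalRing.maximalIdeal R) (le_top : Submodule.map μt ⊤ ≤ ⊤)) this
end

section
/- Let (R, m) be a local domain with a closure operation cl satisfying the big axioms. If α: R → M is a phantom extension, then α(1) ∉ mM. -/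
def IsFullSOP {R : Type} [CommRing R] [IsLocalRing R] {d : ℕ} (y : Fin d → R) : Prop :=
  ringKrullDim R = d ∧
    IsLocalRing.maximalIdeal R ≤ (Ideal.span (Set.range y)).radical

def IsPartialSOP {R : Type} [CommRing R] [IsLocalRing R] {k : ℕ} (x : Fin k → R) : Prop :=
  ∃ (d : ℕ) (y : Fin d → R), IsFullSOP y ∧
    ∃ ι : Fin k → Fin d, Function.Injective ι ∧ ∀ i, y (ι i) = x i

/-- `α : R → M` is a phantom extension w.r.t. `cl`: `α` is injective and for
some (equivalently, every) free presentation `G →ν F →μ Q → 0` of `Q = M/α(R)`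
with lifting `μ̃` and induced `ν̃ : G → R`, one has
`ν̃ ∈ (Im ν^∨)^cl_{G^∨}` where `ν^∨(h) = h ∘ ν`. -/
def IsPhantom {R : Type} [CommRing R] [IsLocalRing R]
    (cl : ∀ (W : Type) [AddCommGroup W] [Module R W], Submodule R W → Submodule R W)
    {M : Type} [AddCommGroup M] [Module R M] (α : R →ₗ[R] M) : Prop :=
  Function.Injective α ∧
  ∃ (G F : Type) (_ : AddCommGroup G) (_ : Module R G) (_ : Module.Free R G)
    (_ : AddCommGroup F) (_ : Module R F) (_ : Module.Free R F)
    (ν : G →ₗ[R] F) (μ : F →ₗ[R] (M ⧸ LinearMap.range α))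
    (μt : F →ₗ[R] M) (νt : G →ₗ[R] R),
      Function.Surjective μ ∧ LinearMap.range ν = LinearMap.ker μ ∧
      (LinearMap.range α).mkQ.comp μt = μ ∧ α.comp νt = μt.comp ν ∧
      νt ∈ cl (G →ₗ[R] R) (LinearMap.range (LinearMap.lcomp R R ν))

/-- over a local domain with a closure operation satisfying the
big axioms, a phantom extension `α : R → M` satisfies `α 1 ∉ mM`. -/
theorem stmt11 {R : Type} [CommRing R] [IsDomain R] [IsLocalRing R]
    (cl : ∀ (M : Type) [AddCommGroup M] [Module R M], Submodule R M → Submodule R M)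
    (ax1 : ∀ (M : Type) [AddCommGroup M] [Module R M] (N : Submodule R M), N ≤ cl M N)
    (ax2 : ∀ (M : Type) [AddCommGroup M] [Module R M] (N : Submodule R M),
      cl M (cl M N) = cl M N)
    (ax3 : ∀ (W : Type) [AddCommGroup W] [Module R W] (N M : Submodule R W),
      N ≤ M → cl W N ≤ cl W M)
    (ax4 : ∀ (M W : Type) [AddCommGroup M] [Module R M] [AddCommGroup W] [Module R W]
      (f : M →ₗ[R] W) (N : Submodule R M), (cl M N).map f ≤ cl W (N.map f))
    (ax5 : ∀ (M : Type) [AddCommGroup M] [Module R M] (N : Submodule R M),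
      cl M N = N → cl (M ⧸ N) (⊥ : Submodule R (M ⧸ N)) = ⊥)
    (ax6 : cl R (IsLocalRing.maximalIdeal R) = IsLocalRing.maximalIdeal R)
    (ax7 : ∀ (k : ℕ) (x : Fin (k + 1) → R), IsPartialSOP x →
      ∀ (M : Type) [AddCommGroup M] [Module R M]
        (f : M →ₗ[R] (R ⧸ Ideal.span (Set.range fun i : Fin k => x i.castSucc))),
        Function.Surjective f → ∀ v : M,
          f v = Submodule.Quotient.mk (x (Fin.last k)) →
          cl M (Submodule.span R {v}) ⊓ LinearMap.ker f ≤
            cl M ((Ideal.span (Set.range fun i : Fin k => x i.castSucc)) •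
              Submodule.span R {v}))
    {M : Type} [AddCommGroup M] [Module R M] (α : R →ₗ[R] M)
    (hph : IsPhantom cl α) :
    α 1 ∉ (IsLocalRing.maximalIdeal R) • (⊤ : Submodule R M) := by

  intro hmem
  obtain ⟨hinj, G, F, _, _, _, _, _, _, ν, μ, μt, νt, hμsurj, hker, hcomp, hνt, hcl⟩ := hph
  set m := IsLocalRing.maximalIdeal R with hm
  -- ⊤ = range α ⊔ range μt
  have htop : (⊤ : Submodule R M) = LinearMap.range α ⊔ LinearMap.range μt := by
    refine le_antisymm (fun x _ => ?_) le_top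
    obtain ⟨f, hf⟩ := hμsurj ((LinearMap.range α).mkQ x)
    have hf' : (LinearMap.range α).mkQ (μt f) = (LinearMap.range α).mkQ x := by
      rw [← hf, ← hcomp]; rfl
    have : x - μt f ∈ LinearMap.range α := by
      rw [← Submodule.ker_mkQ (LinearMap.range α), LinearMap.mem_ker, map_sub, hf', sub_self]
    exact Submodule.mem_sup.2 ⟨x - μt f, this, μt f, ⟨f, rfl⟩, by abel⟩
  rw [htop, Submodule.smul_sup] at hmem
  obtain ⟨y, hy, z, hz, hyz⟩ := Submodule.mem_sup.1 hmem
  -- y = α a with a ∈ m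
  have hy' : y ∈ Submodule.map α ((m : Submodule R R) • ⊤) := by
    rw [Submodule.map_smul'', Submodule.map_top]; exact hy
  obtain ⟨a, ha, hay⟩ := hy'
  have ham : a ∈ m := by
    have : (m : Submodule R R) • ⊤ ≤ (m : Submodule R R) :=
      Submodule.smul_le.2 fun r hr n _ => by
        simpa [smul_eq_mul] using Ideal.mul_mem_right n m hr
    exact this ha
  -- z = μt f with f ∈ m • ⊤
  have hz' : z ∈ Submodule.map μt (m • (⊤ : Submodule R F)) := by
    rw [Submodule.map_smul'', Submodule.map_top]; exact hz
  obtain ⟨f, hf, hfz⟩ := hz'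
  -- 1 - a is a unit
  have hu : IsUnit (1 - a) := by
    by_contra h
    have : (1 : R) ∈ m := by
      have h1 : (1 - a) ∈ m := h
      simpa using m.add_mem h1 ham
    exact (IsLocalRing.maximalIdeal.isMaximal R).ne_top ((Ideal.eq_top_iff_one _).2 this)
  obtain ⟨v, hv⟩ := hu
  set f' : F := ((v⁻¹ : Rˣ) : R) • f with hf'def
  have hf'mem : f' ∈ m • (⊤ : Submodule R F) := Submodule.smul_mem _ _ hf
  have hαf' : α 1 = μt f' := by
    have h1 : α (1 - a) = z := by
      rw [map_sub, hay, ← hyz]; abel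
    have h2 : α (((v⁻¹ : Rˣ) : R) * (1 - a)) = μt f' := by
      rw [← smul_eq_mul, map_smul, h1, ← hfz, hf'def, map_smul]
    rw [← hv, Units.inv_mul] at h2
    exact h2
  -- f' ∈ ker μ
  have hμf' : μ f' = 0 := by
    have : μ f' = (LinearMap.range α).mkQ (μt f') := by rw [← hcomp]; rfl
    rw [this, ← hαf', Submodule.mkQ_apply, Submodule.Quotient.mk_eq_zero]
    exact ⟨1, rfl⟩
  have : f' ∈ LinearMap.range ν := by rw [hker]; exact hμf'
  obtain ⟨g, hg⟩ := this
  have hνtg : νt g = 1 := by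
    apply hinj
    have : α (νt g) = μt (ν g) := congrFun (congrArg DFunLike.coe hνt) g
    rw [this, hg, ← hαf']
  -- evaluation at g
  set e : (G →ₗ[R] R) →ₗ[R] R := LinearMap.applyₗ g with he
  have h1 : e νt ∈ (cl (G →ₗ[R] R) (LinearMap.range (LinearMap.lcomp R R ν))).map e :=
    Submodule.mem_map_of_mem hcl
  have h2 := ax4 _ _ e (LinearMap.range (LinearMap.lcomp R R ν)) h1
  have h3 : (LinearMap.range (LinearMap.lcomp R R ν)).map e ≤ (m : Submodule R R) := by
    rintro x ⟨h, ⟨k, rfl⟩, rfl⟩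
    have hek : e (LinearMap.lcomp R R ν k) = k (ν g) := rfl
    rw [hek, hg]
    have hk : k f' ∈ Submodule.map k (m • (⊤ : Submodule R F)) :=
      Submodule.mem_map_of_mem hf'mem
    rw [Submodule.map_smul''] at hk
    have : (m : Submodule R R) • (Submodule.map k ⊤) ≤ (m : Submodule R R) :=
      Submodule.smul_le.2 fun r hr n _ => by
        simpa [smul_eq_mul] using Ideal.mul_mem_right n m hr
    exact this hk
  have h4 : e νt ∈ (m : Submodule R R) := le_trans (ax3 R _ _ h3) (le_of_eq ax6) h2
  have heq : e νt = νt g := rfl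
  have : (1 : R) ∈ m := by rwa [heq, hνtg] at h4
  exact (IsLocalRing.maximalIdeal.isMaximal R).ne_top ((Ideal.eq_top_iff_one _).2 this)
end

section
/- Let R be a Noetherian commutative ring, ρ: R → T an R-algebra such that T is a finitely generated R-module, and G a free R-module (not necessarily of finite rank). Then the natural map φ: T ⊗_R Hom_R(G, R) → Hom_T(T ⊗_R G, T), defined by φ(t ⊗ h)(t' ⊗ g) = t t' ρ(h(g)), is an isomorphism of T-modules. -/
open TensorProduct Function

section Aux

variable {R : Type} [CommRing R] (ι : Type)

/-- Every element of `(κ → R) ⊗ M` (κ finite) decomposes along the standard basis. -/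
private lemma aux_decomp {M : Type} [AddCommGroup M] [Module R M] {κ : Type} [Fintype κ]
    [DecidableEq κ] (x : (κ → R) ⊗[R] M) :
    ∃ m : κ → M, x = ∑ k, Pi.single k (1 : R) ⊗ₜ[R] m k := by
  induction x with
  | zero => exact ⟨0, by simp⟩
  | tmul p m0 =>
    refine ⟨fun k => p k • m0, ?_⟩
    have hp : p = ∑ k, Pi.single k (p k) := (Finset.univ_sum_single p).symm
    calc p ⊗ₜ[R] m0 = (∑ k, Pi.single k (p k)) ⊗ₜ[R] m0 := by rw [← hp]
      _ = ∑ k, Pi.single k (p k) ⊗ₜ[R] m0 := by rw [sum_tmul]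
      _ = ∑ k, Pi.single k (1 : R) ⊗ₜ[R] (p k • m0) := by
          refine Finset.sum_congr rfl fun k _ => ?_
          rw [← smul_tmul, ← smul_tmul']
          congr 1
          ext j
          simp [Pi.single_apply]
  | add a b ha hb =>
    obtain ⟨ma, hma⟩ := ha
    obtain ⟨mb, hmb⟩ := hb
    refine ⟨ma + mb, ?_⟩
    simp [hma, hmb, tmul_add, Finset.sum_add_distrib]

/-- Naturality of `piScalarRightHom`. -/
private lemma aux_nat {P Q : Type} [AddCommGroup P] [Module R P] [AddCommGroup Q] [Module R Q]
    (f : P →ₗ[R] Q) (x : P ⊗[R] (ι → R)) (i : ι) :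
    piScalarRightHom R R Q ι (f.rTensor (ι → R) x) i = f (piScalarRightHom R R P ι x i) := by
  induction x with
  | zero => simp
  | tmul p g => simp
  | add a b ha hb => simp [ha, hb]

private lemma aux_phi_inj {κ : Type} [Fintype κ] [DecidableEq κ] :
    Injective (piScalarRightHom R R (κ → R) ι) := by
  have h0 : ∀ x, piScalarRightHom R R (κ → R) ι x = 0 → x = 0 := by
    intro x hx
    obtain ⟨m, rfl⟩ := aux_decomp x
    have hm : ∀ k i, m k i = 0 := by
      intro k i
      have := congrFun (congrFun hx i) k
      simpa [Pi.single_apply] using this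
    have : m = 0 := by ext k i; exact hm k i
    simp [this]
  intro x y hxy
  have : x - y = 0 := h0 _ (by rw [map_sub, hxy, sub_self])
  exact sub_eq_zero.mp this

private lemma aux_phi_surj {κ : Type} [Fintype κ] [DecidableEq κ] :
    Surjective (piScalarRightHom R R (κ → R) ι) := by
  intro w
  refine ⟨∑ k, Pi.single k (1 : R) ⊗ₜ[R] (fun i => w i k), ?_⟩
  funext i
  funext k'
  simp [Pi.single_apply]

end Aux

private lemma aux_core {R T : Type} [CommRing R] [IsNoetherianRing R] [CommRing T] [Algebra R T]
    [Module.Finite R T] (ι : Type) :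
    Bijective (piScalarRightHom R T T ι) := by
  classical
  have hsame : ∀ x : T ⊗[R] (ι → R),
      piScalarRightHom R T T ι x = piScalarRightHom R R T ι x := by
    intro x
    induction x with
    | zero => simp
    | tmul t f => simp
    | add a b ha hb => simp [ha, hb]
  obtain ⟨n, π, hπ⟩ := Module.Finite.exists_fin' R T
  have hker : (LinearMap.ker π).FG := IsNoetherian.noetherian _
  obtain ⟨m, s, hs⟩ := Submodule.fg_iff_exists_fin_generating_family.mp hker
  set σ : (Fin m → R) →ₗ[R] (Fin n → R) := Fintype.linearCombination R s with hσ
  have hrange : LinearMap.range σ = LinearMap.ker π := by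
    rw [hσ, Fintype.range_linearCombination]
    exact hs
  have hcomp : π ∘ₗ σ = 0 := by
    apply LinearMap.ext
    intro w
    have : σ w ∈ LinearMap.ker π := hrange ▸ LinearMap.mem_range_self σ w
    simpa using this
  constructor
  · -- injectivity
    have h0 : ∀ x, piScalarRightHom R R T ι x = 0 → x = 0 := by
      intro x hx
      obtain ⟨y, rfl⟩ := LinearMap.rTensor_surjective (ι → R) hπ x
      have hy : ∀ i, π (piScalarRightHom R R (Fin n → R) ι y i) = 0 := by
        intro i
        have := congrFun hx i
        rwa [aux_nat] at this
      have hmem : ∀ i, ∃ z, σ z = piScalarRightHom R R (Fin n → R) ι y i := by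
        intro i
        have : piScalarRightHom R R (Fin n → R) ι y i ∈ LinearMap.ker π := hy i
        rw [← hrange] at this
        exact this
      choose z hz using hmem
      obtain ⟨v, hv⟩ := aux_phi_surj ι (κ := Fin m) z
      have hyv : σ.rTensor (ι → R) v = y := by
        apply aux_phi_inj ι
        funext i
        rw [aux_nat, hv, hz]
      rw [← hyv, ← LinearMap.rTensor_comp_apply, hcomp, LinearMap.rTensor_zero,
        LinearMap.zero_apply]
    intro x y hxy
    have : x - y = 0 := by
      apply h0
      rw [map_sub, ← hsame, ← hsame, hxy, sub_self]
    exact sub_eq_zero.mp this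
  · -- surjectivity
    intro v
    choose u hu using fun i => hπ (v i)
    obtain ⟨y, hy⟩ := aux_phi_surj ι (κ := Fin n) u
    refine ⟨π.rTensor (ι → R) y, ?_⟩
    rw [hsame]
    funext i
    rw [aux_nat, hy]
    exact hu i

/-- for a Noetherian ring `R`, a module-finite `R`-algebra `T`,
and a free `R`-module `G` (not necessarily of finite rank), the natural map
`T ⊗_R Hom_R(G, R) → Hom_T(T ⊗_R G, T)`, `t ⊗ h ↦ (t' ⊗ g ↦ t t' ρ(h g))`,
is an isomorphism of `T`-modules. -/
theorem stmt14 {R T G : Type} [CommRing R] [IsNoetherianRing R]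
    [CommRing T] [Algebra R T] [Module.Finite R T]
    [AddCommGroup G] [Module R G] [Module.Free R G] :
    ∃ φ : (T ⊗[R] (G →ₗ[R] R)) ≃ₗ[T] ((T ⊗[R] G) →ₗ[T] T),
      ∀ (t t' : T) (h : G →ₗ[R] R) (g : G),
        φ (t ⊗ₜ[R] h) (t' ⊗ₜ[R] g) = t * t' * algebraMap R T (h g) := by
  classical
  set ι := Module.Free.ChooseBasisIndex R G with hι
  let b : Module.Basis ι R G := Module.Free.chooseBasis R G
  let d : (ι → R) ≃ₗ[R] (G →ₗ[R] R) := b.constr R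
  let e1 : T ⊗[R] (G →ₗ[R] R) ≃ₗ[T] T ⊗[R] (ι → R) :=
    TensorProduct.AlgebraTensorModule.congr (LinearEquiv.refl T T) d.symm
  let e2 : T ⊗[R] (ι → R) ≃ₗ[T] (ι → T) :=
    LinearEquiv.ofBijective (piScalarRightHom R T T ι) (aux_core ι)
  let e3 : (ι → T) ≃ₗ[T] (G →ₗ[R] T) := b.constr T
  let e4 : (G →ₗ[R] T) ≃ₗ[T] ((T ⊗[R] G) →ₗ[T] T) := LinearMap.liftBaseChangeEquiv T
  refine ⟨e1.trans (e2.trans (e3.trans e4)), ?_⟩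
  intro t t' h g
  have h1 : e1 (t ⊗ₜ[R] h) = t ⊗ₜ[R] (fun i => h (b i)) := by
    simp only [e1, TensorProduct.AlgebraTensorModule.congr_tmul, LinearEquiv.refl_apply]
    rfl
  have h2 : e2 (t ⊗ₜ[R] (fun i => h (b i))) = fun i => h (b i) • t := by
    simp [e2]
  have h3 : e3 (fun i => h (b i) • t) = t • ((Algebra.linearMap R T) ∘ₗ h) := by
    apply b.constr_eq
    intro i
    simp [Algebra.smul_def, mul_comm]
  simp only [LinearEquiv.trans_apply, h1, h2, h3]
  have h4 : e4 (t • ((Algebra.linearMap R T) ∘ₗ h)) (t' ⊗ₜ[R] g)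
      = t' • (t • ((Algebra.linearMap R T) ∘ₗ h)) g := by
    rfl
  rw [h4]
  simp only [LinearMap.smul_apply, LinearMap.comp_apply, Algebra.linearMap_apply,
    smul_eq_mul]
  ring
end

section
/- Let (R, m) be a local domain and cl a closure operation satisfying the big axioms. Let x_1, ..., x_{k+1} be a partial system of parameters, J = (x_1, ..., x_k). Suppose f: M → R/J is any R-module homomorphism (not necessarily surjective) and v ∈ M with f(v) = x_{k+1} + J. Then (Rv)_M^cl ∩ ker f ⊆ (Jv)_M^cl. -/
/-- generalized colon-capturing without the surjectivity
hypothesis on `f`, as a consequence of the big axioms. -/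
theorem stmt17 {R : Type} [CommRing R] [IsDomain R] [IsLocalRing R]
    (cl : ∀ (M : Type) [AddCommGroup M] [Module R M], Submodule R M → Submodule R M)
    (ax1 : ∀ (M : Type) [AddCommGroup M] [Module R M] (N : Submodule R M), N ≤ cl M N)
    (ax2 : ∀ (M : Type) [AddCommGroup M] [Module R M] (N : Submodule R M),
      cl M (cl M N) = cl M N)
    (ax3 : ∀ (W : Type) [AddCommGroup W] [Module R W] (N M : Submodule R W),
      N ≤ M → cl W N ≤ cl W M)
    (ax4 : ∀ (M W : Type) [AddCommGroup M] [Module R M] [AddCommGroup W] [Module R W]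
      (f : M →ₗ[R] W) (N : Submodule R M), (cl M N).map f ≤ cl W (N.map f))
    (ax5 : ∀ (M : Type) [AddCommGroup M] [Module R M] (N : Submodule R M),
      cl M N = N → cl (M ⧸ N) (⊥ : Submodule R (M ⧸ N)) = ⊥)
    (ax6 : cl R (IsLocalRing.maximalIdeal R) = IsLocalRing.maximalIdeal R)
    (ax7 : ∀ (k : ℕ) (x : Fin (k + 1) → R), IsPartialSOP x →
      ∀ (M : Type) [AddCommGroup M] [Module R M]
        (f : M →ₗ[R] (R ⧸ Ideal.span (Set.range fun i : Fin k => x i.castSucc))),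
        Function.Surjective f → ∀ v : M,
          f v = Submodule.Quotient.mk (x (Fin.last k)) →
          cl M (Submodule.span R {v}) ⊓ LinearMap.ker f ≤
            cl M ((Ideal.span (Set.range fun i : Fin k => x i.castSucc)) •
              Submodule.span R {v}))
    (k : ℕ) (x : Fin (k + 1) → R) (hx : IsPartialSOP x)
    (M : Type) [AddCommGroup M] [Module R M]
    (f : M →ₗ[R] (R ⧸ Ideal.span (Set.range fun i : Fin k => x i.castSucc)))
    (v : M) (hv : f v = Submodule.Quotient.mk (x (Fin.last k))) :
    cl M (Submodule.span R {v}) ⊓ LinearMap.ker f ≤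
      cl M ((Ideal.span (Set.range fun i : Fin k => x i.castSucc)) •
        Submodule.span R {v}) := by
  let J : Ideal R := Ideal.span (Set.range fun i : Fin k => x i.castSucc)
  -- build surjective g : M × R → R/J
  let g : (M × R) →ₗ[R] (R ⧸ J) :=
    f.comp (LinearMap.fst R M R) + J.mkQ.comp (LinearMap.snd R M R)
  have hgsurj : Function.Surjective g := by
    intro c
    obtain ⟨r, hr⟩ := Submodule.mkQ_surjective J c
    exact ⟨(0, r), by simp [g, hr]⟩
  let v' : M × R := (v, 0)
  have hgv : g v' = Submodule.Quotient.mk (x (Fin.last k)) := by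
    show f v + J.mkQ 0 = _
    rw [map_zero, add_zero, hv]
  have key := ax7 k x hx (M × R) g hgsurj v' hgv
  intro u hu
  obtain ⟨hu1, hu2⟩ := hu
  let ι : M →ₗ[R] M × R := LinearMap.inl R M R
  let p : (M × R) →ₗ[R] M := LinearMap.fst R M R
  have hmapspan : (Submodule.span R {v}).map ι = Submodule.span R {v'} := by
    rw [Submodule.map_span, Set.image_singleton]; rfl
  have hι : ι u ∈ cl (M × R) (Submodule.span R {v'}) := by
    rw [← hmapspan]
    exact ax4 M (M × R) ι (Submodule.span R {v}) ⟨u, hu1, rfl⟩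
  have hker : ι u ∈ LinearMap.ker g := by
    simp only [LinearMap.mem_ker] at hu2 ⊢
    show f u + J.mkQ 0 = 0
    rw [map_zero, add_zero, hu2]
  have h2 : ι u ∈ cl (M × R) (J • Submodule.span R {v'}) := key ⟨hι, hker⟩
  have hp : p (ι u) ∈ (cl (M × R) (J • Submodule.span R {v'})).map p :=
    ⟨ι u, h2, rfl⟩
  have h3 := ax4 (M × R) M p (J • Submodule.span R {v'}) hp
  have hmap2 : (J • Submodule.span R {v'}).map p = J • Submodule.span R {v} := by
    rw [Submodule.map_smul'', Submodule.map_span, Set.image_singleton]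
    rfl
  rw [hmap2] at h3
  simpa [p, ι] using h3
end
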